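/- If a probability measure μ on the space of finite rooted binary trees (with μ(φ)=0) is prune-invariant, i.e., the pushforward ν = μ∘R⁻¹ under the pruning map satisfies ν(T | T ≠ φ) = μ(T), then the distribution of Horton-Strahler orders is geometric: μ(H_K) = p(1−p)^{K−1} for all K ≥ 1, where p = μ(H_1). -/

import Mathlib

open MeasureTheory

/-- **Prune-invariance implies geometric order distribution.**
`Tree` is the space of finite rooted binary trees with empty tree `φ`,
`R` is the pruning map (with `R φ = φ`), and `ord` is the Horton–Strahler
order, characterized by `ord φ = 0` and `ord t = ord (R t) + 1` for `t ≠ φ`.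
If a probability measure `μ` with `μ {φ} = 0` is prune-invariant, i.e. the
pushforward `ν = μ ∘ R⁻¹` satisfies `ν(A | ≠ φ) = μ(A)`, then
`μ(H_K) = p (1-p)^(K-1)` with `p = μ(H_1)`. -/
theorem stmt_0 {Tree : Type*} [MeasurableSpace Tree]
    (hmeas : ∀ s : Set Tree, MeasurableSet s)
    (R : Tree → Tree) (φ : Tree) (hRφ : R φ = φ)
    (ord : Tree → ℕ) (hord0 : ord φ = 0)
    (hordφ : ∀ t, ord t = 0 → t = φ)
    (hords : ∀ t, t ≠ φ → ord t = ord (R t) + 1)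
    (μ : Measure Tree) [IsProbabilityMeasure μ] (hφ : μ {φ} = 0)
    (hinv : ∀ A : Set Tree,
      (μ.map R) (A ∩ {t | t ≠ φ}) = (μ.map R) {t | t ≠ φ} * μ A) :
    ∀ K : ℕ, 1 ≤ K →
      μ {t | ord t = K} = μ {t | ord t = 1} * (1 - μ {t | ord t = 1}) ^ (K - 1) := by
  have hR : Measurable R := fun s _ => hmeas _
  have hmap : ∀ s : Set Tree, (μ.map R) s = μ (R ⁻¹' s) := fun s =>
    Measure.map_apply hR (hmeas s)
  set p := μ {t | ord t = 1} with hp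
  have hp1 : p ≤ 1 := prob_le_one
  -- the set where R t = φ
  have hset0 : {t : Tree | R t = φ} = {t | ord t = 1} ∪ {φ} := by
    ext t
    simp only [Set.mem_setOf_eq, Set.mem_union, Set.mem_singleton_iff]
    constructor
    · intro h
      by_cases ht : t = φ
      · exact Or.inr ht
      · exact Or.inl (by rw [hords t ht, h, hord0])
    · rintro (h | h)
      · have ht : t ≠ φ := by
          intro e; rw [e, hord0] at h; exact one_ne_zero h.symm
        have := hords t ht
        rw [h] at this
        exact hordφ _ (by omega)
      · rw [h, hRφ]
  have hμ0 : μ {t : Tree | R t = φ} = p := by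
    rw [hset0]
    refine le_antisymm ((measure_union_le _ _).trans ?_) (measure_mono Set.subset_union_left)
    rw [hφ, add_zero]
  -- ν {≠φ} = 1 - p
  have hν : (μ.map R) {t : Tree | t ≠ φ} = 1 - p := by
    rw [hmap]
    have : R ⁻¹' {t : Tree | t ≠ φ} = {t : Tree | R t = φ}ᶜ := by
      ext t; simp [Set.mem_compl_iff]
    rw [this, measure_compl (hmeas _) (measure_ne_top μ _), hμ0, measure_univ]
  -- recursion
  have hrec : ∀ K : ℕ, 1 ≤ K →
      μ {t | ord t = K + 1} = (1 - p) * μ {t | ord t = K} := by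
    intro K hK
    have hpre : R ⁻¹' ({t | ord t = K} ∩ {t | t ≠ φ}) = {t | ord t = K + 1} := by
      ext t
      simp only [Set.mem_preimage, Set.mem_inter_iff, Set.mem_setOf_eq]
      constructor
      · rintro ⟨h1, h2⟩
        have ht : t ≠ φ := by
          intro e; rw [e, hRφ] at h2; exact h2 rfl
        rw [hords t ht, h1]
      · intro h
        have ht : t ≠ φ := by
          intro e; rw [e, hord0] at h; omega
        have h1 : ord (R t) = K := by
          have := hords t ht; omega
        refine ⟨h1, fun e => ?_⟩
        rw [e, hord0] at h1; omega
    have := hinv {t | ord t = K}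
    rw [hmap, hpre, hν] at this
    exact this
  -- induction
  intro K hK
  induction K with
  | zero => omega
  | succ n ih =>
    rcases Nat.eq_or_lt_of_le hK with h | h
    · simp [← h]; exact hp.symm
    · have hn : 1 ≤ n := by omega
      rw [hrec n hn, ih hn]
      have : n + 1 - 1 = (n - 1) + 1 := by omega
      rw [this, pow_succ]
      ring
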